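/- Let 𝔉 be a union-closed family of subsets of a set X with |X| = n. Then the number of join-irreducible elements of 𝔉 satisfies |J(𝔉)| ≤ 2·C(n, ⌊n/2⌋) + C(n, ⌊n/2⌋ + 1). In particular, any family S ⊆ 2^X with |S| > 2·C(n, ⌊n/2⌋) + C(n, ⌊n/2⌋ + 1) is not union-independent. -/

import Mathlib

open Finset

variable {α : Type*} [DecidableEq α]

/-- A family is union-closed if it is closed under pairwise unions. -/
def UnionClosed (F : Finset (Finset α)) : Prop := ∀ f ∈ F, ∀ g ∈ F, f ∪ g ∈ F

/-- The join-irreducible elements of a family. -/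
def Jirr (F : Finset (Finset α)) : Finset (Finset α) :=
  F.filter fun g => ∀ h ∈ F, ∀ t ∈ F, h ∪ t = g → h = g ∨ t = g

/-- A family S is union-independent if no element z ∈ S is a union of
elements of S \ {z}. -/
def UnionIndep (S : Finset (Finset α)) : Prop :=
  ∀ z ∈ S, ∀ T ⊆ S.erase z, T.Nonempty → T.sup id ≠ z

namespace Stmt18Aux

/-! ### Union-closed families: the join-irreducibles are union-independent -/

lemma sup_mem {F : Finset (Finset α)} (hF : UnionClosed F) :
    ∀ {T : Finset (Finset α)}, T.Nonempty → T ⊆ F → T.sup id ∈ F := by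
  intro T hne
  induction hne using Finset.Nonempty.cons_induction with
  | singleton a => intro h; simpa using h (mem_singleton_self a)
  | cons a s ha hs ih =>
      intro h
      rw [Finset.sup_cons]
      exact hF _ (h (mem_cons_self a s)) _
        (ih (fun x hx => h (mem_cons.mpr (Or.inr hx))))

lemma mem_of_sup_eq {F : Finset (Finset α)} (hF : UnionClosed F) :
    ∀ {T : Finset (Finset α)}, T.Nonempty → T ⊆ F →
      ∀ z ∈ Jirr F, T.sup id = z → z ∈ T := by
  intro T hne
  induction hne using Finset.Nonempty.cons_induction with
  | singleton a =>
      intro _ z _ hsup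
      simp only [Finset.sup_singleton, id] at hsup
      simp [hsup]
  | cons a s ha hs ih =>
      intro hTF z hz hsup
      rw [Finset.sup_cons] at hsup
      have hP := (mem_filter.mp hz).2
      have haF : a ∈ F := hTF (mem_cons_self a s)
      have hsF : s ⊆ F := fun x hx => hTF (mem_cons.mpr (Or.inr hx))
      have hsupF : s.sup id ∈ F := sup_mem hF hs hsF
      rcases hP a haF (s.sup id) hsupF hsup with h1 | h2
      · exact h1 ▸ mem_cons_self a s
      · exact mem_cons.mpr (Or.inr (ih hsF z hz h2))

lemma unionIndep_jirr {F : Finset (Finset α)} (hF : UnionClosed F) :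
    UnionIndep (Jirr F) := by
  intro z hz T hT hne hsup
  have hTF : T ⊆ F :=
    hT.trans ((erase_subset _ _).trans (filter_subset _ _))
  have hzT : z ∈ T := mem_of_sup_eq hF hne hTF z hz hsup
  exact (mem_erase.mp (hT hzT)).1 rfl

/-! ### The x-point lemma -/

lemma exists_xp {S : Finset (Finset α)} (hS : UnionIndep S) {v : Finset α}
    (hv : v ∈ S) (hne : v.Nonempty) :
    ∃ x ∈ v, ∀ y ∈ S, y ⊂ v → x ∉ y := by
  classical
  by_cases hTne : (S.filter (fun w => w ⊂ v)).Nonempty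
  · have hsub : S.filter (fun w => w ⊂ v) ⊆ S.erase v := by
      intro y hy
      have := mem_filter.mp hy
      exact mem_erase.mpr ⟨this.2.ne, this.1⟩
    have hne' := hS v hv _ hsub hTne
    have hle : (S.filter (fun w => w ⊂ v)).sup id ≤ v := by
      refine Finset.sup_le fun y hy => ?_
      exact Finset.le_iff_subset.mpr (mem_filter.mp hy).2.subset
    have hnv : ¬ (v ⊆ (S.filter (fun w => w ⊂ v)).sup id) :=
      fun hvle => hne' (le_antisymm hle (Finset.le_iff_subset.mpr hvle))
    obtain ⟨x, hxv, hxs⟩ := Finset.not_subset.mp hnv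
    refine ⟨x, hxv, fun y hy hyv hxy => hxs ?_⟩
    have hyle : id y ≤ (S.filter (fun w => w ⊂ v)).sup id :=
      Finset.le_sup (mem_filter.mpr ⟨hy, hyv⟩)
    exact Finset.le_iff_subset.mp hyle hxy
  · obtain ⟨x, hx⟩ := hne
    exact ⟨x, hx, fun y hy hyv _ => hTne ⟨y, mem_filter.mpr ⟨hy, hyv⟩⟩⟩

/-! ### Height function -/

def hgt [Fintype α] (S : Finset (Finset α)) (z : Finset α) : ℕ :=
  ((S.filter (fun y => z ⊂ y)).attach).sup (fun y => hgt S y.1 + 1)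
termination_by Fintype.card α - z.card
decreasing_by
  have hy := (Finset.mem_filter.mp y.2).2
  have h1 : z.card < y.1.card := Finset.card_lt_card hy
  have h2 : y.1.card ≤ Fintype.card α := by
    simpa using Finset.card_le_univ y.1
  omega

variable [Fintype α]

lemma hgt_lt {S : Finset (Finset α)} {z y : Finset α} (hy : y ∈ S) (hzy : z ⊂ y) :
    hgt S y < hgt S z := by
  have h : hgt S y + 1 ≤ hgt S z := by
    conv_rhs => rw [hgt.eq_def]
    exact Finset.le_sup (f := fun w => hgt S w.1 + 1)
      (Finset.mem_attach _ ⟨y, Finset.mem_filter.mpr ⟨hy, hzy⟩⟩)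
  omega

lemma hgt_exists {S : Finset (Finset α)} {z : Finset α} (h : hgt S z ≠ 0) :
    ∃ y ∈ S, z ⊂ y ∧ hgt S y + 1 = hgt S z := by
  have hne : ((S.filter (fun y => z ⊂ y)).attach).Nonempty := by
    by_contra h0
    rw [Finset.not_nonempty_iff_eq_empty] at h0
    apply h
    rw [hgt.eq_def, h0]
    rfl
  obtain ⟨y, _, hsup⟩ := Finset.exists_mem_eq_sup _ hne (fun y => hgt S y.1 + 1)
  refine ⟨y.1, (mem_filter.mp y.2).1, (mem_filter.mp y.2).2, ?_⟩
  conv_rhs => rw [hgt.eq_def]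
  exact hsup.symm

lemma hgt_add_card_le (S : Finset (Finset α)) (z : Finset α) :
    hgt S z + z.card ≤ Fintype.card α := by
  suffices H : ∀ t, ∀ w : Finset α, hgt S w = t → hgt S w + w.card ≤ Fintype.card α from
    H _ z rfl
  intro t
  induction t using Nat.strong_induction_on with
  | _ t ih =>
    intro w hw
    rcases Nat.eq_zero_or_pos t with rfl | hpos
    · rw [hw]
      simpa using Finset.card_le_univ w
    · obtain ⟨y, hyS, hwy, hy⟩ := hgt_exists (S := S) (z := w) (by omega)
      have h1 : hgt S y + y.card ≤ Fintype.card α := ih (hgt S y) (by omega) y rfl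
      have h2 : w.card < y.card := Finset.card_lt_card hwy
      omega

/-! ### The tower lemma -/

lemma tower {S : Finset (Finset α)} (hS : UnionIndep S) :
    ∀ z ∈ S, ∃ Q : Finset α, Q.card = hgt S z ∧ Disjoint Q z ∧
      ∀ u ∈ S, u ⊆ z ∪ Q → (∀ w ∈ S, z ⊂ w → ¬ w ⊆ u) → u ⊆ z := by
  suffices H : ∀ t, ∀ z, z ∈ S → hgt S z = t →
      ∃ Q : Finset α, Q.card = t ∧ Disjoint Q z ∧
        ∀ u ∈ S, u ⊆ z ∪ Q → (∀ w ∈ S, z ⊂ w → ¬ w ⊆ u) → u ⊆ z by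
    intro z hz
    obtain ⟨Q, h1, h2, h3⟩ := H _ z hz rfl
    exact ⟨Q, h1, h2, h3⟩
  intro t
  induction t using Nat.strong_induction_on with
  | _ t ih =>
    intro z hzS hzt
    rcases Nat.eq_zero_or_pos t with rfl | hpos
    · refine ⟨∅, rfl, disjoint_empty_left _, fun u _ hsub _ => ?_⟩
      simpa using hsub
    · obtain ⟨y, hyS, hzy, hy⟩ := hgt_exists (S := S) (z := z) (by omega)
      obtain ⟨Qy, hQc, hQd, hQp⟩ := ih (hgt S y) (by omega) y hyS rfl
      have hyne : y.Nonempty := by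
        obtain ⟨a, hay, -⟩ := Finset.exists_of_ssubset hzy
        exact ⟨a, hay⟩
      obtain ⟨x, hxy, hx⟩ := exists_xp hS hyS hyne
      have hxQy : x ∉ Qy := fun hxQ => (Finset.disjoint_left.mp hQd hxQ) hxy
      refine ⟨insert x Qy, ?_, ?_, ?_⟩
      · rw [Finset.card_insert_of_notMem hxQy, hQc]
        omega
      · rw [Finset.disjoint_left]
        intro a haI haz
        rcases Finset.mem_insert.mp haI with rfl | haQ
        · exact hx z hzS hzy haz
        · exact Finset.disjoint_left.mp hQd haQ (hzy.subset haz)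
      · intro u huS hsub hside
        have h1 : u ⊆ y ∪ Qy := by
          intro a hau
          rcases Finset.mem_union.mp (hsub hau) with haz | haI
          · exact Finset.mem_union.mpr (Or.inl (hzy.subset haz))
          · rcases Finset.mem_insert.mp haI with rfl | haQ
            · exact Finset.mem_union.mpr (Or.inl hxy)
            · exact Finset.mem_union.mpr (Or.inr haQ)
        have h2 : u ⊆ y := hQp u huS h1 (fun w hw hyw => hside w hw (hzy.trans hyw))
        have h3 : ¬ y ⊆ u := hside y hyS hzy
        have h4 : u ⊂ y := h2.ssubset_of_ne (by rintro rfl; exact h3 Finset.Subset.rfl)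
        have h5 : x ∉ u := hx u huS h4
        intro a hau
        rcases Finset.mem_union.mp (hsub hau) with haz | haI
        · exact haz
        · rcases Finset.mem_insert.mp haI with rfl | haQ
          · exact absurd hau h5
          · exact absurd (h2 hau) (fun hay => Finset.disjoint_left.mp hQd haQ hay)


lemma count_lemma [Fintype α] (z Q : Finset α) (hd : Disjoint z Q) :
    (Fintype.card α).factorial ≤
      (Finset.univ.filter (fun σ : α ≃ Fin (Fintype.card α) =>
        ∀ a ∈ z, ∀ b : α, b ∉ z → b ∉ Q → σ a < σ b)).card *
      ((Fintype.card α - Q.card).choose ((Fintype.card α - Q.card) / 2)) := by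
  classical
  set n := Fintype.card α with hn
  set t := Q.card with ht
  set s := z.card with hs
  have hst : s + t ≤ n := by
    have h1 : (z ∪ Q).card ≤ Fintype.card α := by
      simpa using Finset.card_le_univ (z ∪ Q)
    rw [Finset.card_union_of_disjoint hd] at h1
    exact h1
  have hsle : s ≤ n - t := by omega
  set W : Finset α := Finset.univ \ (z ∪ Q) with hW
  have hWcard : W.card = n - t - s := by
    rw [hW, Finset.card_sdiff_of_subset (Finset.subset_univ _), Finset.card_univ,
      Finset.card_union_of_disjoint hd]
    omega
  set O : Finset (α ≃ Fin n) := Finset.univ.filter (fun σ =>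
      ∀ a ∈ z, ∀ b : α, b ∉ z → b ∉ Q → σ a < σ b) with hO
  have hRcard : ∀ f : ↥Q ↪ Fin n,
      ((Finset.univ : Finset (Fin n)) \ Finset.univ.image (⇑f)).card = n - t := by
    intro f
    rw [Finset.card_sdiff_of_subset (Finset.subset_univ _), Finset.card_univ,
      Finset.card_image_of_injective _ f.injective, Finset.card_univ,
      Fintype.card_coe, Fintype.card_fin]
  let eFn : (f : ↥Q ↪ Fin n) →
      (Fin (n - t) ≃o ↥((Finset.univ : Finset (Fin n)) \ Finset.univ.image (⇑f))) :=
    fun f => Finset.orderIsoOfFin _ (hRcard f)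
  have hmemW : ∀ a : α, a ∉ Q → a ∉ z → a ∈ W := by
    intro a h1 h2
    rw [hW, Finset.mem_sdiff]
    exact ⟨Finset.mem_univ a, fun hmem => by
      rcases Finset.mem_union.mp hmem with h | h
      exacts [h2 h, h1 h]⟩
  let Fb : (↥Q ↪ Fin n) → (↥z ≃ Fin s) → (↥W ≃ Fin (n - t - s)) → α → Fin n :=
    fun f g h a =>
      if haQ : a ∈ Q then f ⟨a, haQ⟩
      else if haz : a ∈ z then
        ((eFn f) ⟨(g ⟨a, haz⟩).1, lt_of_lt_of_le (g ⟨a, haz⟩).isLt hsle⟩ : _).1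
      else
        ((eFn f) ⟨s + (h ⟨a, hmemW a haQ haz⟩).1, by
          have := (h ⟨a, hmemW a haQ haz⟩).isLt; omega⟩ : _).1
  have heNotim : ∀ (f : ↥Q ↪ Fin n) (i : Fin (n - t)),
      ((eFn f) i : Fin n) ∉ Finset.univ.image (⇑f) := by
    intro f i
    have h2 := ((eFn f) i).2
    rw [Finset.mem_sdiff] at h2
    exact h2.2
  have hFbQ : ∀ f g h a (ha : a ∈ Q), Fb f g h a = f ⟨a, ha⟩ := by
    intro f g h a ha
    simp only [Fb, dif_pos ha]
  have hFbCR : ∀ f g h a, a ∉ Q → ∃ i : Fin (n - t), Fb f g h a = ((eFn f) i : Fin n) := by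
    intro f g h a haQ
    by_cases haz : a ∈ z
    · exact ⟨⟨(g ⟨a, haz⟩).1, lt_of_lt_of_le (g ⟨a, haz⟩).isLt hsle⟩,
        by simp only [Fb, dif_neg haQ, dif_pos haz]⟩
    · exact ⟨⟨s + (h ⟨a, hmemW a haQ haz⟩).1, by
          have := (h ⟨a, hmemW a haQ haz⟩).isLt; omega⟩,
        by simp only [Fb, dif_neg haQ, dif_neg haz]⟩
  have hFbinj : ∀ f g h, Function.Injective (Fb f g h) := by
    intro f g h a b hab
    by_cases haQ : a ∈ Q <;> by_cases hbQ : b ∈ Q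
    · rw [hFbQ f g h a haQ, hFbQ f g h b hbQ] at hab
      exact congrArg Subtype.val (f.injective hab)
    · exfalso
      obtain ⟨i, hi⟩ := hFbCR f g h b hbQ
      rw [hFbQ f g h a haQ, hi] at hab
      have : ((eFn f) i : Fin n) ∈ Finset.univ.image (⇑f) := by
        rw [← hab]; exact Finset.mem_image_of_mem _ (Finset.mem_univ _)
      exact heNotim f i this
    · exfalso
      obtain ⟨i, hi⟩ := hFbCR f g h a haQ
      rw [hFbQ f g h b hbQ, hi] at hab
      have : ((eFn f) i : Fin n) ∈ Finset.univ.image (⇑f) := by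
        rw [hab]; exact Finset.mem_image_of_mem _ (Finset.mem_univ _)
      exact heNotim f i this
    · by_cases haz : a ∈ z <;> by_cases hbz : b ∈ z
      · simp only [Fb, dif_neg haQ, dif_neg hbQ, dif_pos haz, dif_pos hbz] at hab
        have h1 := (eFn f).injective (Subtype.coe_injective hab)
        have h2 := congrArg Fin.val h1
        exact congrArg Subtype.val (g.injective (Fin.ext h2))
      · exfalso
        simp only [Fb, dif_neg haQ, dif_neg hbQ, dif_pos haz, dif_neg hbz] at hab
        have h1 := (eFn f).injective (Subtype.coe_injective hab)
        have h2 := congrArg Fin.val h1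
        simp only at h2
        have := (g ⟨a, haz⟩).isLt
        omega
      · exfalso
        simp only [Fb, dif_neg haQ, dif_neg hbQ, dif_neg haz, dif_pos hbz] at hab
        have h1 := (eFn f).injective (Subtype.coe_injective hab)
        have h2 := congrArg Fin.val h1
        simp only at h2
        have := (g ⟨b, hbz⟩).isLt
        omega
      · simp only [Fb, dif_neg haQ, dif_neg hbQ, dif_neg haz, dif_neg hbz] at hab
        have h1 := (eFn f).injective (Subtype.coe_injective hab)
        have h2 := congrArg Fin.val h1
        simp only at h2
        have h3 : ((h ⟨a, hmemW a haQ haz⟩ : Fin (n - t - s)) : ℕ) =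
            ((h ⟨b, hmemW b hbQ hbz⟩ : Fin (n - t - s)) : ℕ) := by omega
        have h4 : h ⟨a, hmemW a haQ haz⟩ = h ⟨b, hmemW b hbQ hbz⟩ := Fin.ext h3
        exact congrArg Subtype.val (h.injective h4)
  have hFbbij : ∀ f g h, Function.Bijective (Fb f g h) := by
    intro f g h
    rw [Fintype.bijective_iff_injective_and_card]
    refine ⟨hFbinj f g h, ?_⟩
    rw [Fintype.card_fin]
  have hFbO : ∀ f g h, (Equiv.ofBijective _ (hFbbij f g h)) ∈ O := by
    intro f g h
    rw [hO, Finset.mem_filter]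
    refine ⟨Finset.mem_univ _, ?_⟩
    intro a ha b hbz hbQ
    have haQ : a ∉ Q := Finset.disjoint_left.mp hd ha
    show Fb f g h a < Fb f g h b
    simp only [Fb, dif_neg haQ, dif_pos ha, dif_neg hbQ, dif_neg hbz]
    refine Subtype.coe_lt_coe.mpr ((eFn f).strictMono ?_)
    rw [Fin.mk_lt_mk]
    have := (g ⟨a, ha⟩).isLt
    omega
  let J : (↥Q ↪ Fin n) × (↥z ≃ Fin s) × (↥W ≃ Fin (n - t - s)) → {σ // σ ∈ O} :=
    fun fgh => ⟨Equiv.ofBijective _ (hFbbij fgh.1 fgh.2.1 fgh.2.2), hFbO _ _ _⟩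
  have hJinj : Function.Injective J := by
    rintro ⟨f, g, h⟩ ⟨f', g', h'⟩ hJ
    have hFF : Fb f g h = Fb f' g' h' := by
      have h0 := congrArg (fun x => ((x : {σ // σ ∈ O}) : α ≃ Fin n).toFun) hJ
      exact h0
    have hff' : f = f' := by
      apply Function.Embedding.ext
      intro q
      have h0 := congrFun hFF q.1
      rw [hFbQ f g h q.1 q.2, hFbQ f' g' h' q.1 q.2] at h0
      simpa using h0
    subst hff'
    have hgg' : g = g' := by
      apply Equiv.ext
      intro a
      have haQ : a.1 ∉ Q := Finset.disjoint_left.mp hd a.2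
      have h0 := congrFun hFF a.1
      simp only [Fb, dif_neg haQ, dif_pos a.2, Subtype.eta] at h0
      have h1 := (eFn f).injective (Subtype.coe_injective h0)
      have h2 := congrArg Fin.val h1
      simp only at h2
      exact Fin.ext h2
    subst hgg'
    have hhh' : h = h' := by
      apply Equiv.ext
      intro a
      have haW : (a : α) ∈ Finset.univ \ (z ∪ Q) := a.2
      rw [Finset.mem_sdiff] at haW
      have haQ : a.1 ∉ Q := fun hmem => haW.2 (Finset.mem_union.mpr (Or.inr hmem))
      have haz : a.1 ∉ z := fun hmem => haW.2 (Finset.mem_union.mpr (Or.inl hmem))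
      have h0 := congrFun hFF a.1
      simp only [Fb, dif_neg haQ, dif_neg haz, Subtype.eta] at h0
      have h1 := (eFn f).injective (Subtype.coe_injective h0)
      have h2 := congrArg Fin.val h1
      simp only at h2
      have h3 : ((h a : Fin (n - t - s)) : ℕ) = ((h' a : Fin (n - t - s)) : ℕ) := by omega
      exact Fin.ext h3
    subst hhh'
    rfl
  have hcard1 : Fintype.card (↥Q ↪ Fin n) = n.descFactorial t := by
    rw [Fintype.card_embedding_eq, Fintype.card_fin, Fintype.card_coe]
  have hcard2 : Fintype.card (↥z ≃ Fin s) = s.factorial := by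
    rw [Fintype.card_equiv (Fintype.equivFinOfCardEq (by rw [Fintype.card_coe])),
      Fintype.card_coe]
  have hcard3 : Fintype.card (↥W ≃ Fin (n - t - s)) = (n - t - s).factorial := by
    rw [Fintype.card_equiv (Fintype.equivFinOfCardEq (by rw [Fintype.card_coe, hWcard])),
      Fintype.card_coe, hWcard]
  have hOcard : n.descFactorial t * (s.factorial * (n - t - s).factorial) ≤ O.card := by
    have h0 := Fintype.card_le_of_injective J hJinj
    rw [Fintype.card_coe] at h0
    rw [Fintype.card_prod, Fintype.card_prod, hcard1, hcard2, hcard3] at h0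
    exact h0
  have e1 : (n - t).factorial * n.descFactorial t = n.factorial :=
    Nat.factorial_mul_descFactorial (by omega)
  have e2 : (n - t).choose s * s.factorial * ((n - t) - s).factorial = (n - t).factorial :=
    Nat.choose_mul_factorial_mul_factorial hsle
  have e4 : n.factorial = n.descFactorial t * (s.factorial * (n - t - s).factorial) *
      ((n - t).choose s) := by
    rw [← e1, ← e2]
    ring
  have e5 : (n - t).choose s ≤ (n - t).choose ((n - t) / 2) := Nat.choose_le_middle _ _
  calc n.factorial = n.descFactorial t * (s.factorial * (n - t - s).factorial) *
        ((n - t).choose s) := e4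
    _ ≤ O.card * ((n - t).choose s) := Nat.mul_le_mul_right _ hOcard
    _ ≤ O.card * ((n - t).choose ((n - t) / 2)) := Nat.mul_le_mul_left _ e5

lemma arith : ∀ n : ℕ, ∑ j ∈ Finset.range (n+1), (j.choose (j/2)) ≤
    2 * n.choose (n/2) + n.choose (n/2 + 1) := by
  intro n
  induction n with
  | zero => simp
  | succ n ih =>
    rw [Finset.sum_range_succ]
    rcases Nat.even_or_odd n with ⟨m, hm⟩ | ⟨m, hm⟩
    · -- n = m + m
      have h1 : n / 2 = m := by omega
      have h2 : (n+1) / 2 = m := by omega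
      have h3 : (n+1) = m + m + 1 := by omega
      rw [h1] at ih
      rw [h2]
      have p1 : (n+1).choose (m+1) = n.choose m + n.choose (m+1) :=
        Nat.choose_succ_succ' n m
      have p2 : n.choose m ≤ (n+1).choose m := Nat.choose_le_choose m (by omega)
      omega
    · -- n = 2*m + 1
      have h1 : n / 2 = m := by omega
      have h2 : (n+1) / 2 = m + 1 := by omega
      rw [h1] at ih
      rw [h2]
      have p1 : (n+1).choose (m+1) = n.choose m + n.choose (m+1) :=
        Nat.choose_succ_succ' n m
      have p2 : (n+1).choose (m+2) = n.choose (m+1) + n.choose (m+2) :=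
        Nat.choose_succ_succ' n (m+1)
      have p4 : (n+1).choose (m+1+1) = (n+1).choose (m+2) := rfl
      have p3 : n.choose (m+1) = n.choose m := by
        have := Nat.choose_symm_half m
        rw [show 2*m+1 = n by omega] at this
        exact this
      omega


lemma layer_bound [Fintype α] {S : Finset (Finset α)} (hS : UnionIndep S) (t : ℕ) :
    (S.filter (fun z => hgt S z = t)).card ≤
      (Fintype.card α - t).choose ((Fintype.card α - t) / 2) := by
  classical
  set n := Fintype.card α with hn
  set A := S.filter (fun z => hgt S z = t) with hA
  have hmemS : ∀ z : {w // w ∈ A}, z.1 ∈ S := fun z => (mem_filter.mp z.2).1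
  have hhgt : ∀ z : {w // w ∈ A}, hgt S z.1 = t := fun z => (mem_filter.mp z.2).2
  have htow : ∀ z : {w // w ∈ A}, ∃ Q : Finset α, Q.card = t ∧ Disjoint Q z.1 ∧
      ∀ u ∈ S, u ⊆ z.1 ∪ Q → (∀ w ∈ S, z.1 ⊂ w → ¬ w ⊆ u) → u ⊆ z.1 := by
    intro z
    obtain ⟨Q, h1, h2, h3⟩ := tower hS z.1 (hmemS z)
    exact ⟨Q, by rw [h1, hhgt z], h2, h3⟩
  choose Q hQcard hQdisj hQpeel using htow
  set O : {w // w ∈ A} → Finset (α ≃ Fin n) := fun z => Finset.univ.filter (fun σ =>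
      ∀ a ∈ z.1, ∀ b : α, b ∉ z.1 → b ∉ Q z → σ a < σ b) with hOdef
  have hnsub : ∀ z z' : {w // w ∈ A}, z ≠ z' → ¬ z.1 ⊆ z'.1 := by
    intro z z' hne hsub
    have hne' : z.1 ≠ z'.1 := fun h => hne (Subtype.ext h)
    have hss : z.1 ⊂ z'.1 := hsub.ssubset_of_ne hne'
    have hlt := hgt_lt (hmemS z') hss
    rw [hhgt z, hhgt z'] at hlt
    omega
  have hpeel : ∀ z z' : {w // w ∈ A}, z ≠ z' → z.1 ⊆ z'.1 ∪ Q z' → False := by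
    intro z z' hne hsub
    have h1 : z.1 ⊆ z'.1 := by
      refine hQpeel z' z.1 (hmemS z) hsub ?_
      intro w hw hzw hwz
      exact hnsub z' z (fun h => hne h.symm) (hzw.subset.trans hwz)
    exact hnsub z z' hne h1
  have hdisj : ∀ z ∈ A.attach, ∀ z' ∈ A.attach, z ≠ z' → Disjoint (O z) (O z') := by
    intro z _ z' _ hne
    rw [Finset.disjoint_left]
    intro σ hσ hσ'
    have h1 := (Finset.mem_filter.mp hσ).2
    have h2 := (Finset.mem_filter.mp hσ').2
    by_cases hA1 : ∃ a ∈ z.1, a ∉ z'.1 ∧ a ∉ Q z'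
    · by_cases hB1 : ∃ b ∈ z'.1, b ∉ z.1 ∧ b ∉ Q z
      · obtain ⟨a, ha, ha1, ha2⟩ := hA1
        obtain ⟨b, hb, hb1, hb2⟩ := hB1
        have l1 : σ a < σ b := h1 a ha b hb1 hb2
        have l2 : σ b < σ a := h2 b hb a ha1 ha2
        exact absurd (l1.trans l2) (lt_irrefl _)
      · push_neg at hB1
        refine hpeel z' z (fun h => hne h.symm) ?_
        intro b hb
        by_cases hbz : b ∈ z.1
        · exact Finset.mem_union_left _ hbz
        · exact Finset.mem_union_right _ (hB1 b hb hbz)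
    · push_neg at hA1
      refine hpeel z z' hne ?_
      intro a ha
      by_cases haz : a ∈ z'.1
      · exact Finset.mem_union_left _ haz
      · exact Finset.mem_union_right _ (hA1 a ha haz)
  have hcount : ∀ z : {w // w ∈ A},
      n.factorial ≤ (O z).card * ((n - t).choose ((n - t)/2)) := by
    intro z
    have hcl := count_lemma z.1 (Q z) (hQdisj z).symm
    rw [hQcard z] at hcl
    exact hcl
  have hbiU : ∑ z ∈ A.attach, (O z).card ≤ (Finset.univ : Finset (α ≃ Fin n)).card := by
    rw [← Finset.card_biUnion hdisj]
    exact Finset.card_le_card (Finset.subset_univ _)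
  have huniv : (Finset.univ : Finset (α ≃ Fin n)).card = n.factorial := by
    rw [Finset.card_univ, Fintype.card_equiv (Fintype.equivFin α)]
  have hmain : n.factorial * A.card ≤ n.factorial * ((n - t).choose ((n - t)/2)) := by
    calc n.factorial * A.card = ∑ _z ∈ A.attach, n.factorial := by
          rw [Finset.sum_const, Finset.card_attach, smul_eq_mul, mul_comm]
      _ ≤ ∑ z ∈ A.attach, (O z).card * ((n - t).choose ((n - t)/2)) :=
          Finset.sum_le_sum (fun z _ => hcount z)
      _ = (∑ z ∈ A.attach, (O z).card) * ((n - t).choose ((n - t)/2)) :=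
          (Finset.sum_mul _ _ _).symm
      _ ≤ n.factorial * ((n - t).choose ((n - t)/2)) := by
          refine Nat.mul_le_mul_right _ ?_
          rw [← huniv]
          exact hbiU
  exact Nat.le_of_mul_le_mul_left hmain (Nat.factorial_pos n)

lemma main_bound [Fintype α] {S : Finset (Finset α)} (hS : UnionIndep S) :
    S.card ≤ 2 * (Fintype.card α).choose (Fintype.card α / 2) +
      (Fintype.card α).choose (Fintype.card α / 2 + 1) := by
  classical
  have hpart : S.card = ∑ t ∈ Finset.range (Fintype.card α + 1),
      (S.filter (fun z => hgt S z = t)).card := by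
    apply Finset.card_eq_sum_card_fiberwise
    intro z hz
    rw [Finset.mem_coe, Finset.mem_range]
    have := hgt_add_card_le S z
    omega
  rw [hpart]
  have hre : ∑ t ∈ Finset.range (Fintype.card α + 1),
      ((Fintype.card α - t).choose ((Fintype.card α - t) / 2)) =
      ∑ j ∈ Finset.range (Fintype.card α + 1), j.choose (j / 2) := by
    have := Finset.sum_range_reflect (fun j => j.choose (j / 2)) (Fintype.card α + 1)
    simpa using this
  calc ∑ t ∈ Finset.range (Fintype.card α + 1), (S.filter (fun z => hgt S z = t)).card
      ≤ ∑ t ∈ Finset.range (Fintype.card α + 1),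
          ((Fintype.card α - t).choose ((Fintype.card α - t) / 2)) :=
        Finset.sum_le_sum (fun t _ => layer_bound hS t)
    _ = ∑ j ∈ Finset.range (Fintype.card α + 1), j.choose (j / 2) := hre
    _ ≤ 2 * (Fintype.card α).choose (Fintype.card α / 2) +
          (Fintype.card α).choose (Fintype.card α / 2 + 1) := arith (Fintype.card α)

end Stmt18Aux

/-- Corollary 6.7: |J(𝔉)| ≤ 2·C(n,⌊n/2⌋) + C(n,⌊n/2⌋+1); in particular any
family S ⊆ 2^X with more elements than this bound is not union-independent. -/
theorem stmt_18 {α : Type*} [DecidableEq α] [Fintype α]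
    (F : Finset (Finset α)) (hF : UnionClosed F) :
    (Jirr F).card ≤
      2 * (Fintype.card α).choose (Fintype.card α / 2) +
        (Fintype.card α).choose (Fintype.card α / 2 + 1) ∧
    ∀ S : Finset (Finset α),
      2 * (Fintype.card α).choose (Fintype.card α / 2) +
        (Fintype.card α).choose (Fintype.card α / 2 + 1) < S.card →
      ¬ UnionIndep S := by
  constructor
  · exact Stmt18Aux.main_bound (Stmt18Aux.unionIndep_jirr hF)
  · intro S hlt hindep
    have := Stmt18Aux.main_bound hindep
    omega
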